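/- Let α be a countable limit ordinal and let {x_γ : γ < α} be a transfinite sequence of points in a complete metric space M such that for every limit ordinal β < α the sequence {x_γ : γ < β} converges to x_β. Suppose that Σ_{γ < α} d(x_γ, x_{γ+1}) < +∞ (i.e., the family of consecutive distances is summable). Then {x_γ : γ < α} converges to a point x ∈ M, and moreover d(x_0, x) ≤ Σ_{γ < α} d(x_γ, x_{γ+1}). -/

import Mathlib

open Ordinal

/-- If `{x_γ : γ < α}` (α a countable limit ordinal) is a transfinite sequence
in a complete metric space such that `{x_γ : γ < β}` converges to `x_β` for
every limit `β < α`, and the consecutive distances are summable, then the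
sequence converges to some `l` with `d(x_0, l) ≤ ∑_{γ<α} d(x_γ, x_{γ+1})`. -/
theorem transfinite_summable_converges (M : Type*) [MetricSpace M] [CompleteSpace M]
    (α : Ordinal) (hlim : Order.IsSuccLimit α) (hcount : α.card ≤ Cardinal.aleph0)
    (x : Ordinal → M)
    (hconv : ∀ β : Ordinal, β < α → Order.IsSuccLimit β →
      ∀ ε : ℝ, 0 < ε → ∃ β' < β, ∀ γ : Ordinal,
        β' < γ → γ < β → dist (x γ) (x β) < ε)
    (hsum : Summable fun γ : Set.Iio α => dist (x γ.1) (x (γ.1 + 1))) :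
    ∃ l : M,
      (∀ ε : ℝ, 0 < ε → ∃ β < α, ∀ γ : Ordinal,
        β < γ → γ < α → dist (x γ) l < ε) ∧
      dist (x 0) l ≤ ∑' γ : Set.Iio α, dist (x γ.1) (x (γ.1 + 1)) := by
  classical
  set g : Ordinal → ℝ := (Set.Iio α).indicator (fun δ => dist (x δ) (x (δ + 1))) with hgdef
  have hgnn : ∀ δ, 0 ≤ g δ := fun δ => Set.indicator_nonneg (fun _ _ => dist_nonneg) δ
  have hgsum : Summable g := summable_subtype_iff_indicator.mp hsum
  have hgval : ∀ δ, δ < α → g δ = dist (x δ) (x (δ + 1)) := fun δ hδ =>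
    Set.indicator_of_mem hδ _
  -- monotonicity of sums over predicates
  have mono : ∀ (p q : Ordinal → Prop), (∀ y, p y → q y) →
      (∑' δ : {δ // p δ}, g δ) ≤ ∑' δ : {δ // q δ}, g δ := by
    intro p q hpq
    exact (hgsum.subtype {δ | p δ}).tsum_le_tsum_of_inj (fun δ => ⟨δ.1, hpq _ δ.2⟩)
      (fun a b h => Subtype.ext (by simpa [Subtype.mk.injEq] using h))
      (fun c _ => hgnn c) (fun _ => le_rfl)
      (hgsum.subtype {δ | q δ})
  have epsle : ∀ a b : ℝ, (∀ ε : ℝ, 0 < ε → a ≤ b + ε) → a ≤ b := by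
    intro a b h
    by_contra hc
    push_neg at hc
    have := h ((a - b) / 2) (by linarith)
    linarith
  -- key estimate
  have key : ∀ γ, γ < α → ∀ β, β ≤ γ →
      dist (x β) (x γ) ≤ ∑' δ : Set.Ico β γ, g δ := by
    intro γ
    induction γ using Ordinal.induction with
    | h γ IH =>
      intro hγα β hβ
      rcases eq_or_lt_of_le hβ with rfl | hβ'
      · simp only [dist_self]
        exact tsum_nonneg (fun δ : Set.Ico β β => hgnn δ.1)
      rcases Ordinal.zero_or_succ_or_isSuccLimit γ with h0 | ⟨a, rfl⟩ | hlimγ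
      · exact absurd (h0 ▸ hβ') (not_lt_zero (a := β))
      · have haγ : a < Order.succ a := Order.lt_succ a
        have haα : a < α := lt_trans haγ hγα
        have hβa : β ≤ a := Order.lt_succ_iff.mp hβ'
        have hset : Set.Ico β (Order.succ a) = Set.Ico β a ∪ {a} := by
          ext δ
          simp only [Set.mem_Ico, Set.mem_union, Set.mem_singleton_iff, Order.lt_succ_iff]
          constructor
          · rintro ⟨h1, h2⟩
            rcases lt_or_eq_of_le h2 with h | h
            · exact Or.inl ⟨h1, h⟩
            · exact Or.inr h
          · rintro (⟨h1, h2⟩ | rfl)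
            · exact ⟨h1, le_of_lt h2⟩
            · exact ⟨hβa, le_rfl⟩
        have hdisj : Disjoint (Set.Ico β a) ({a} : Set Ordinal) := by
          simp only [Set.disjoint_singleton_right, Set.mem_Ico]
          exact fun h => lt_irrefl a h.2
        calc dist (x β) (x (Order.succ a))
            ≤ dist (x β) (x a) + dist (x a) (x (Order.succ a)) := dist_triangle _ _ _
          _ ≤ (∑' δ : Set.Ico β a, g δ) + g a := by
              refine add_le_add (IH a haγ haα β hβa) (le_of_eq ?_)
              rw [hgval a haα, Ordinal.add_one_eq_succ]
          _ = ∑' δ : Set.Ico β (Order.succ a), g δ := by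
              rw [hset, (hgsum.subtype _).tsum_union_disjoint hdisj (hgsum.subtype _),
                tsum_singleton]
      · refine epsle _ _ ?_
        intro ε hε
        obtain ⟨β', hβ'γ, hfar⟩ := hconv γ hγα hlimγ ε hε
        set δ : Ordinal := Order.succ (max β β') with hδdef
        have hmax : max β β' < γ := max_lt hβ' hβ'γ
        have hδγ : δ < γ := hlimγ.succ_lt hmax
        have hδα : δ < α := lt_trans hδγ hγα
        have hβδ : β ≤ δ := le_of_lt (lt_of_le_of_lt (le_max_left _ _) (Order.lt_succ _))
        have hβ'δ : β' < δ := lt_of_le_of_lt (le_max_right _ _) (Order.lt_succ _)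
        calc dist (x β) (x γ) ≤ dist (x β) (x δ) + dist (x δ) (x γ) := dist_triangle _ _ _
          _ ≤ (∑' δ' : Set.Ico β δ, g δ') + ε :=
              add_le_add (IH δ hδγ hδα β hβδ) (le_of_lt (hfar δ hβ'δ hδγ))
          _ ≤ (∑' δ' : Set.Ico β γ, g δ') + ε := by
              refine add_le_add_left (mono _ _ ?_) ε
              intro y hy
              exact ⟨hy.1, lt_trans hy.2 hδγ⟩
  -- tail sums are small
  have tail : ∀ ε : ℝ, 0 < ε → ∃ β < α, (∑' δ : Set.Ioo β α, g δ) < ε := by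
    intro ε hε
    obtain ⟨F, hF⟩ :=
      ((tendsto_order.1 (tendsto_tsum_compl_atTop_zero g)).2 ε hε).exists
    refine ⟨(F.filter (· < α)).sup id, ?_, ?_⟩
    · refine (Finset.sup_lt_iff ?_).mpr ?_
      · simpa [Ordinal.bot_eq_zero] using hlim.pos
      · intro b hb
        simpa using (Finset.mem_filter.mp hb).2
    · refine lt_of_le_of_lt ?_ hF
      refine mono _ _ ?_
      intro y hy hyF
      have : y ∈ F.filter (· < α) := Finset.mem_filter.mpr ⟨hyF, hy.2⟩
      have hle : y ≤ (F.filter (· < α)).sup id := Finset.le_sup (f := id) this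
      exact absurd hle (not_le_of_gt hy.1)
  -- Cauchy-type condition
  have cauchy_cond : ∀ ε : ℝ, 0 < ε → ∃ β < α, ∀ γ δ : Ordinal,
      β < γ → γ < α → β < δ → δ < α → dist (x γ) (x δ) < ε := by
    intro ε hε
    obtain ⟨β, hβα, hβ⟩ := tail ε hε
    refine ⟨β, hβα, ?_⟩
    have aux : ∀ γ δ : Ordinal, β < γ → γ ≤ δ → δ < α →
        dist (x γ) (x δ) < ε := by
      intro γ δ h1 h2 h3
      refine lt_of_le_of_lt (le_trans (key δ h3 γ h2) (mono _ _ ?_)) hβ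
      intro y hy
      exact ⟨lt_of_lt_of_le h1 hy.1, lt_trans hy.2 h3⟩
    intro γ δ h1 h2 h3 h4
    rcases le_total γ δ with h | h
    · exact aux γ δ h1 h h4
    · rw [dist_comm]; exact aux δ γ h3 h h2
  -- a cofinal increasing ω-sequence
  have hcnt : Countable (Set.Iio α) := by
    rw [← Cardinal.mk_le_aleph0_iff, Ordinal.mk_Iio_ordinal]
    exact Cardinal.lift_le_aleph0.mpr hcount
  have hne : Nonempty (Set.Iio α) := ⟨⟨0, hlim.pos⟩⟩
  obtain ⟨e, he⟩ := exists_surjective_nat (Set.Iio α)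
  set b : ℕ → Ordinal := fun n => ((Finset.range (n + 1)).sup fun i => (e i).1) + 1
    with hbdef
  have hbα : ∀ n, b n < α := by
    intro n
    have hs : ((Finset.range (n + 1)).sup fun i => (e i).1) < α := by
      refine (Finset.sup_lt_iff ?_).mpr fun i _ => (e i).2
      simpa [Ordinal.bot_eq_zero] using hlim.pos
    rw [hbdef]
    simpa using hlim.succ_lt hs
  have hbmono : Monotone b := by
    intro m n hmn
    refine add_le_add_left (Finset.sup_mono ?_) 1
    exact Finset.range_subset_range.mpr (by omega)
  have hcof : ∀ γ, γ < α → ∃ n, γ < b n := by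
    intro γ hγ
    obtain ⟨n, hn⟩ := he ⟨γ, hγ⟩
    refine ⟨n, ?_⟩
    have h1 : γ ≤ (Finset.range (n + 1)).sup fun i => (e i).1 := by
      have := Finset.le_sup (f := fun i => (e i).1)
        (Finset.self_mem_range_succ n)
      simpa [hn] using this
    refine lt_of_le_of_lt h1 ?_
    rw [hbdef]
    exact Order.lt_add_one_iff.mpr le_rfl
  -- the sequence x ∘ b is Cauchy
  have hcauchy : CauchySeq fun n => x (b n) := by
    rw [Metric.cauchySeq_iff]
    intro ε hε
    obtain ⟨β, hβα, hβ⟩ := cauchy_cond ε hε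
    obtain ⟨N, hN⟩ := hcof β hβα
    refine ⟨N, fun m hm n hn => ?_⟩
    exact hβ (b m) (b n) (lt_of_lt_of_le hN (hbmono hm)) (hbα m)
      (lt_of_lt_of_le hN (hbmono hn)) (hbα n)
  obtain ⟨l, hl⟩ := cauchySeq_tendsto_of_complete hcauchy
  refine ⟨l, ?_, ?_⟩
  · -- convergence
    intro ε hε
    obtain ⟨β, hβα, hβ⟩ := cauchy_cond (ε / 2) (half_pos hε)
    obtain ⟨N0, hN0⟩ := Metric.tendsto_atTop.mp hl (ε / 2) (half_pos hε)
    obtain ⟨n1, hn1⟩ := hcof β hβα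
    set n := max n1 N0 with hndef
    have hbn : β < b n := lt_of_lt_of_le hn1 (hbmono (le_max_left _ _))
    refine ⟨β, hβα, ?_⟩
    intro γ h1 h2
    calc dist (x γ) l ≤ dist (x γ) (x (b n)) + dist (x (b n)) l := dist_triangle _ _ _
      _ < ε / 2 + ε / 2 := by
          refine add_lt_add (hβ γ (b n) h1 h2 hbn (hbα n)) ?_
          exact hN0 n (le_max_right _ _)
      _ = ε := add_halves ε
  · -- distance bound
    have heq : (∑' δ : Set.Iio α, g δ)
        = ∑' γ : Set.Iio α, dist (x γ.1) (x (γ.1 + 1)) :=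
      tsum_congr fun δ => Set.indicator_of_mem δ.2 _
    rw [← heq]
    have htend : Filter.Tendsto (fun n => dist (x 0) (x (b n)))
        Filter.atTop (nhds (dist (x 0) l)) := Filter.Tendsto.dist tendsto_const_nhds hl
    refine le_of_tendsto' htend ?_
    intro n
    refine le_trans (key (b n) (hbα n) 0 zero_le) (mono _ _ ?_)
    intro y hy
    exact lt_trans hy.2 (hbα n)
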